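/- (Minkowski direction of the Minkowski–Weyl theorem, Theorem 1) For every matrix A ∈ ℝ^{m×n} and every b ∈ ℝ^m, there exist natural numbers p, q and matrices Υ ∈ ℝ^{n×p} and Γ ∈ ℝ^{n×q} such that {z ∈ ℝⁿ | A z ≤ b} = {Υ μ + Γ λ | μ ∈ ℝᵖ, λ ∈ ℝ^q, μ ≥ 0 componentwise, λ ≥ 0 componentwise, Σⱼ λⱼ = 1}. -/

import Mathlib

open Finset Matrix


/-- The finitely generated cone spanned by a finite family of vectors. -/
def coneSet {n : ℕ} {ι : Type} [Fintype ι] (v : ι → (Fin n → ℝ)) : Set (Fin n → ℝ) :=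
  {x | ∃ c : ι → ℝ, (∀ k, 0 ≤ c k) ∧ x = ∑ k, c k • v k}

lemma zero_mem_coneSet {n : ℕ} {ι : Type} [Fintype ι] (v : ι → (Fin n → ℝ)) :
    (0 : Fin n → ℝ) ∈ coneSet v :=
  ⟨0, fun _ => le_refl 0, by simp⟩

lemma gen_mem_coneSet {n : ℕ} {ι : Type} [Fintype ι] [DecidableEq ι]
    (v : ι → (Fin n → ℝ)) (k : ι) : v k ∈ coneSet v := by
  refine ⟨fun j => if j = k then 1 else 0, fun j => by dsimp only; split <;> norm_num, ?_⟩
  rw [Finset.sum_eq_single k]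
  · simp
  · intro j _ hj; simp [hj]
  · simp

lemma two_gen_mem_coneSet {n : ℕ} {ι : Type} [Fintype ι] [DecidableEq ι]
    (v : ι → (Fin n → ℝ)) {i j : ι} (hij : i ≠ j) {s t : ℝ} (hs : 0 ≤ s) (ht : 0 ≤ t) :
    s • v i + t • v j ∈ coneSet v := by
  classical
  refine ⟨fun k => if k = i then s else if k = j then t else 0, ?_, ?_⟩
  · intro k; dsimp only; split
    · exact hs
    · split; exact ht; exact le_refl 0
  · rw [show (∑ k, (if k = i then s else if k = j then t else 0) • v k)
        = ∑ k, ((if k = i then s • v i else 0) + (if k = j then t • v j else 0)) from ?_]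
    · rw [Finset.sum_add_distrib]; simp
    · apply Finset.sum_congr rfl; intro k _
      by_cases h1 : k = i
      · subst h1; simp [hij]
      · by_cases h2 : k = j
        · subst h2; simp [h1, Ne.symm hij]
        · simp [h1, h2]

lemma coneSet_subset {n : ℕ} {ι κ : Type} [Fintype ι] [Fintype κ] (v : ι → Fin n → ℝ)
    (w : κ → Fin n → ℝ) (h : ∀ k, w k ∈ coneSet v) : coneSet w ⊆ coneSet v := by
  rintro x ⟨d, hd, rfl⟩
  choose c hc hw using h
  refine ⟨fun i => ∑ k, d k * c k i,
    fun i => Finset.sum_nonneg fun k _ => mul_nonneg (hd k) (hc k i), ?_⟩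
  calc ∑ k, d k • w k = ∑ k, ∑ i, (d k * c k i) • v i := by
        simp_rw [hw, Finset.smul_sum, smul_smul]
    _ = ∑ i, (∑ k, d k * c k i) • v i := by
        rw [Finset.sum_comm]; simp_rw [Finset.sum_smul]

section
variable {n : ℕ} {ι : Type} [Fintype ι]

lemma dotProduct_coneSum (a : Fin n → ℝ) (c : ι → ℝ) (v : ι → Fin n → ℝ) :
    a ⬝ᵥ (∑ k, c k • v k) = ∑ k, c k * (a ⬝ᵥ v k) := by
  simp only [dotProduct, Finset.sum_apply, Finset.mul_sum, Pi.smul_apply,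
    smul_eq_mul]
  rw [Finset.sum_comm]
  apply Finset.sum_congr rfl; intro k _
  apply Finset.sum_congr rfl; intro t _
  ring
end

lemma dd_step {n : ℕ} {ι : Type} [Fintype ι] (v : ι → Fin n → ℝ) (a : Fin n → ℝ) :
    ∃ (κ : Type) (_ : Fintype κ) (w : κ → Fin n → ℝ),
      coneSet v ∩ {x | a ⬝ᵥ x ≤ 0} = coneSet w := by
  classical
  set s : ι → ℝ := fun i => a ⬝ᵥ v i with hs
  set w : ι ⊕ ι × ι → Fin n → ℝ := Sum.elim
      (fun i => if s i ≤ 0 then v i else 0)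
      (fun ij => if s ij.1 ≤ 0 ∧ 0 < s ij.2 then s ij.2 • v ij.1 - s ij.1 • v ij.2 else 0)
    with hw
  refine ⟨ι ⊕ ι × ι, inferInstance, w, ?_⟩
  apply Set.Subset.antisymm
  · -- hard direction
    rintro x ⟨⟨c, hc, rfl⟩, hx⟩
    have hx' : ∑ k, c k * s k ≤ 0 := by
      rw [← dotProduct_coneSum]; exact hx
    set Neg : Finset ι := univ.filter (fun i => s i ≤ 0) with hNeg
    set Pos : Finset ι := univ.filter (fun i => ¬ s i ≤ 0) with hPos
    set Ng : ℝ := ∑ i ∈ Neg, c i * s i with hNg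
    set P : ℝ := ∑ i ∈ Pos, c i * s i with hP
    have hsplit : Ng + P = ∑ k, c k * s k :=
      Finset.sum_filter_add_sum_filter_not univ _ _
    have hP0 : 0 ≤ P := Finset.sum_nonneg fun i hi => by
      have := (Finset.mem_filter.mp hi).2
      exact mul_nonneg (hc i) (le_of_lt (lt_of_not_ge this))
    by_cases hPz : P = 0
    · -- all positive-side coefficients vanish
      have hz : ∀ i ∈ Pos, c i = 0 := by
        intro i hi
        have h0 : c i * s i = 0 :=
          (Finset.sum_eq_zero_iff_of_nonneg (fun j hj =>
            mul_nonneg (hc j) (le_of_lt (lt_of_not_ge (Finset.mem_filter.mp hj).2)))).mp hPz i hi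
        rcases mul_eq_zero.mp h0 with h | h
        · exact h
        · exact absurd (h ▸ le_refl (0:ℝ)) (Finset.mem_filter.mp hi).2
      refine ⟨Sum.elim (fun i => if s i ≤ 0 then c i else 0) (fun _ => 0), ?_, ?_⟩
      · rintro (i | ij)
        · dsimp only [Sum.elim_inl]; split
          · exact hc i
          · exact le_refl 0
        · exact le_refl 0
      · rw [Fintype.sum_sum_type]
        simp only [Sum.elim_inl, Sum.elim_inr, zero_smul, Finset.sum_const_zero, add_zero, hw]
        apply Finset.sum_congr rfl
        intro i _
        by_cases h : s i ≤ 0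
        · simp [h]
        · have : c i = 0 := hz i (Finset.mem_filter.mpr ⟨Finset.mem_univ i, h⟩)
          simp [h, this]
    · -- P > 0 : must mix in the pair generators
      have hPpos : 0 < P := lt_of_le_of_ne hP0 (Ne.symm hPz)
      have hNgneg : Ng ≤ -P := by linarith
      set T : ℝ := -Ng with hT
      have hTpos : 0 < T := by simp only [hT]; linarith
      have hPT : P / T ≤ 1 := (div_le_one hTpos).mpr (by linarith)
      refine ⟨Sum.elim (fun i => if s i ≤ 0 then c i * (1 - P / T) else 0)
        (fun ij => if s ij.1 ≤ 0 ∧ 0 < s ij.2 then c ij.1 * c ij.2 / T else 0), ?_, ?_⟩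
      · rintro (i | ij)
        · dsimp only [Sum.elim_inl]; split
          · exact mul_nonneg (hc i) (by linarith)
          · exact le_refl 0
        · dsimp only [Sum.elim_inr]; split
          · exact div_nonneg (mul_nonneg (hc _) (hc _)) hTpos.le
          · exact le_refl 0
      · rw [Fintype.sum_sum_type]
        simp only [Sum.elim_inl, Sum.elim_inr, hw]
        have e1 : ∑ i, (if s i ≤ 0 then c i * (1 - P / T) else 0) •
            (if s i ≤ 0 then v i else 0) = ∑ i ∈ Neg, (c i * (1 - P / T)) • v i := by
          rw [Finset.sum_filter]
          apply Finset.sum_congr rfl; intro i _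
          by_cases h : s i ≤ 0 <;> simp [h]
        have e2 : ∑ ij : ι × ι, (if s ij.1 ≤ 0 ∧ 0 < s ij.2 then c ij.1 * c ij.2 / T else 0) •
            (if s ij.1 ≤ 0 ∧ 0 < s ij.2 then s ij.2 • v ij.1 - s ij.1 • v ij.2 else 0)
            = ∑ i ∈ Neg, ∑ j ∈ Pos, (c i * c j / T) • (s j • v i - s i • v j) := by
          rw [Fintype.sum_prod_type]
          conv_rhs => rw [Finset.sum_filter]
          apply Finset.sum_congr rfl; intro i _
          by_cases h1 : s i ≤ 0
          · rw [if_pos h1]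
            conv_rhs => rw [Finset.sum_filter]
            apply Finset.sum_congr rfl; intro j _
            by_cases h2 : s j ≤ 0
            · simp [h1, h2, not_lt.mpr h2]
            · simp [h1, h2, lt_of_not_ge h2]
          · rw [if_neg h1]
            apply Finset.sum_eq_zero
            intro j _
            simp [h1]
        rw [e1, e2]
        have e3 : ∀ i ∈ Neg, ∑ j ∈ Pos, (c i * c j / T) • (s j • v i - s i • v j)
            = (c i * (P / T)) • v i - (c i * s i) • ((1/T) • ∑ j ∈ Pos, c j • v j) := by
          intro i _
          have hshow : (c i * (P/T)) • v i = ∑ j ∈ Pos, (c i * (c j * s j) / T) • v i := by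
            rw [← Finset.sum_smul]
            congr 1
            rw [hP, ← mul_div_assoc, Finset.mul_sum, Finset.sum_div]
          rw [hshow, Finset.smul_sum, Finset.smul_sum, ← Finset.sum_sub_distrib]
          apply Finset.sum_congr rfl; intro j _
          rw [smul_sub, smul_smul, smul_smul, smul_smul, smul_smul]
          congr 1
          · congr 1; ring
          · congr 1; ring
        rw [Finset.sum_congr rfl e3, Finset.sum_sub_distrib, ← Finset.sum_smul]
        have e4 : (∑ i ∈ Neg, c i * s i) = -T := by rw [hT, hNg]; ring
        rw [e4]
        have e5 : (-T) • ((1/T) • ∑ j ∈ Pos, c j • v j) = -∑ j ∈ Pos, c j • v j := by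
          rw [smul_smul]
          rw [show (-T) * (1/T) = -1 by field_simp]
          simp
        rw [e5, sub_neg_eq_add]
        have e6 : ∑ i ∈ Neg, ((c i * (1 - P / T)) • v i + (c i * (P / T)) • v i)
            = ∑ i ∈ Neg, c i • v i := by
          apply Finset.sum_congr rfl; intro i _
          rw [← add_smul]; congr 1; ring
        rw [← add_assoc, ← Finset.sum_add_distrib, e6, Finset.sum_filter_add_sum_filter_not]
  · -- easy direction
    intro x hx
    constructor
    · refine coneSet_subset v w ?_ hx
      rintro (i | ij)
      · simp only [hw, Sum.elim_inl]; split
        · exact gen_mem_coneSet v i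
        · exact zero_mem_coneSet v
      · simp only [hw, Sum.elim_inr]; split
        · rename_i h
          obtain ⟨h1, h2⟩ := h
          have hij : ij.1 ≠ ij.2 := by rintro h; rw [h] at h1; linarith
          rw [sub_eq_add_neg, ← neg_smul]
          exact two_gen_mem_coneSet v hij h2.le (by linarith)
        · exact zero_mem_coneSet v
    · obtain ⟨d, hd, rfl⟩ := hx
      have : a ⬝ᵥ ∑ k, d k • w k = ∑ k, d k * (a ⬝ᵥ w k) := dotProduct_coneSum a d w
      rw [Set.mem_setOf_eq, this]
      apply Finset.sum_nonpos
      intro k _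
      apply mul_nonpos_of_nonneg_of_nonpos (hd k)
      rcases k with i | ij
      · simp only [hw, Sum.elim_inl]; split
        · assumption
        · simp
      · simp only [hw, Sum.elim_inr]; split
        · rw [dotProduct_sub, dotProduct_smul, dotProduct_smul]
          have h1 : a ⬝ᵥ v ij.1 = s ij.1 := rfl
          have h2 : a ⬝ᵥ v ij.2 = s ij.2 := rfl
          rw [h1, h2]
          simp only [smul_eq_mul]
          exact le_of_eq (by ring)
        · simp

lemma univ_subset_coneSet (n : ℕ) :
    (Set.univ : Set (Fin n → ℝ)) ⊆ coneSet (Sum.elim (fun i : Fin n => Pi.single i (1:ℝ))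
      (fun i : Fin n => -Pi.single i (1:ℝ))) := by
  intro x _
  refine ⟨Sum.elim (fun i => max (x i) 0) (fun i => max (-x i) 0), ?_, ?_⟩
  · rintro (i | i) <;> exact le_max_right _ _
  · rw [Fintype.sum_sum_type]
    funext t
    simp only [Sum.elim_inl, Sum.elim_inr, Pi.add_apply, Finset.sum_apply, Pi.smul_apply,
      smul_eq_mul, Pi.neg_apply, Pi.single_apply, mul_ite, mul_one, mul_zero, mul_neg,
      Finset.sum_neg_distrib, Finset.sum_ite_eq, Finset.mem_univ, if_true]
    rw [← sub_eq_add_neg, max_zero_sub_max_neg_zero_eq_self]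

lemma cone_poly (m n : ℕ) (A : Fin m → (Fin n → ℝ)) :
    ∃ (ι : Type) (_ : Fintype ι) (v : ι → Fin n → ℝ),
      {x : Fin n → ℝ | ∀ i, A i ⬝ᵥ x ≤ 0} = coneSet v := by
  induction m with
  | zero =>
    refine ⟨Fin n ⊕ Fin n, inferInstance,
      Sum.elim (fun i : Fin n => Pi.single i (1:ℝ)) (fun i : Fin n => -Pi.single i (1:ℝ)), ?_⟩
    apply Set.Subset.antisymm
    · exact fun x _ => univ_subset_coneSet n (Set.mem_univ x)
    · intro x _ i; exact i.elim0
  | succ m ih =>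
    obtain ⟨ι, _, v, hv⟩ := ih (fun i => A i.succ)
    obtain ⟨κ, _, w, hw⟩ := dd_step v (A 0)
    refine ⟨κ, ‹_›, w, ?_⟩
    rw [← hw, ← hv]
    ext x
    simp only [Set.mem_setOf_eq, Set.mem_inter_iff]
    constructor
    · intro h; exact ⟨fun i => h i.succ, h 0⟩
    · rintro ⟨h1, h2⟩ i
      exact Fin.cases h2 h1 i

lemma dot_snoc {n : ℕ} (u : Fin n → ℝ) (r : ℝ) (y : Fin (n+1) → ℝ) :
    (Fin.snoc u r : Fin (n+1) → ℝ) ⬝ᵥ y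
      = u ⬝ᵥ (fun j => y (Fin.castSucc j)) + r * y (Fin.last n) := by
  rw [dotProduct, Fin.sum_univ_castSucc]
  simp [dotProduct]

lemma dot_lastRow {n : ℕ} (y : Fin (n+1) → ℝ) :
    (fun j => if j = Fin.last n then (-1:ℝ) else 0) ⬝ᵥ y = - y (Fin.last n) := by
  rw [dotProduct]
  simp [ite_mul]

lemma mulVec_cols {n N : ℕ} (M : Matrix (Fin n) (Fin N) ℝ) (μ : Fin N → ℝ) :
    M.mulVec μ = ∑ j, μ j • (fun i => M i j) := by
  funext i
  rw [Matrix.mulVec, dotProduct, Finset.sum_apply]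
  apply Finset.sum_congr rfl
  intro j _
  simp [mul_comm]

/-- Minkowski direction of the Minkowski–Weyl theorem: every polyhedron
`{z | A z ≤ b}` is a finitely generated set `{Υ μ + Γ λ | μ ≥ 0, λ ≥ 0, ∑ λ = 1}`. -/
theorem minkowski_direction (m n : ℕ) (A : Matrix (Fin m) (Fin n) ℝ) (b : Fin m → ℝ) :
    ∃ (p q : ℕ) (Υ : Matrix (Fin n) (Fin p) ℝ) (Γ : Matrix (Fin n) (Fin q) ℝ),
      {z : Fin n → ℝ | ∀ i, A.mulVec z i ≤ b i} =
      {z : Fin n → ℝ | ∃ (μ : Fin p → ℝ) (l : Fin q → ℝ),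
        (∀ i, 0 ≤ μ i) ∧ (∀ j, 0 ≤ l j) ∧ (∑ j, l j) = 1 ∧
        z = Υ.mulVec μ + Γ.mulVec l} := by
  classical
  set Ah : Fin (m+1) → (Fin (n+1) → ℝ) :=
    Fin.snoc (fun i => Fin.snoc (A i) (-(b i)))
      (fun j => if j = Fin.last n then (-1:ℝ) else 0) with hAh
  obtain ⟨ι, _, v, hv⟩ := cone_poly (m+1) (n+1) Ah
  -- each generator has nonnegative last coordinate
  have hlast : ∀ k, 0 ≤ v k (Fin.last n) := by
    intro k
    have hk : v k ∈ coneSet v := gen_mem_coneSet v k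
    rw [← hv] at hk
    have h := hk (Fin.last m)
    rw [hAh, Fin.snoc_last, dot_lastRow] at h
    linarith
  -- membership characterisation via the lifted cone
  have hmem : ∀ z : Fin n → ℝ,
      (∀ i, A.mulVec z i ≤ b i) ↔ (Fin.snoc z 1 : Fin (n+1) → ℝ) ∈ coneSet v := by
    intro z
    rw [← hv]
    have hcast : (fun j => (Fin.snoc z (1:ℝ) : Fin (n+1) → ℝ) (Fin.castSucc j)) = z := by
      funext j; rw [Fin.snoc_castSucc]
    constructor
    · intro h i
      refine Fin.lastCases ?_ ?_ i
      · rw [hAh, Fin.snoc_last, dot_lastRow, Fin.snoc_last]; linarith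
      · intro i'
        rw [hAh, Fin.snoc_castSucc, dot_snoc, hcast, Fin.snoc_last]
        have h2 : A i' ⬝ᵥ z ≤ b i' := h i'
        linarith
    · intro h i
      have h2 := h (Fin.castSucc i)
      rw [hAh, Fin.snoc_castSucc, dot_snoc, hcast, Fin.snoc_last] at h2
      have : A i ⬝ᵥ z ≤ b i := by linarith
      exact this
  -- split generators according to last coordinate
  set pk : ι → Prop := fun k => 0 < v k (Fin.last n) with hpk
  have hzero : ∀ k : ι, ¬ pk k → v k (Fin.last n) = 0 :=
    fun k h => le_antisymm (not_lt.mp h) (hlast k)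
  set p : ℕ := Fintype.card {k // ¬ pk k} with hp
  set q : ℕ := Fintype.card {k // pk k} with hq
  set ep : Fin p ≃ {k // ¬ pk k} := (Fintype.equivFin {k // ¬ pk k}).symm with hep
  set eq : Fin q ≃ {k // pk k} := (Fintype.equivFin {k // pk k}).symm with heq
  refine ⟨p, q, fun i j => v (ep j).1 (Fin.castSucc i),
    fun i j => v (eq j).1 (Fin.castSucc i) / v (eq j).1 (Fin.last n), ?_⟩
  ext z
  simp only [Set.mem_setOf_eq]
  rw [hmem z]
  constructor
  · rintro ⟨c, hc, hsum⟩
    refine ⟨fun j => c (ep j).1, fun j => c (eq j).1 * v (eq j).1 (Fin.last n),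
      fun j => hc _, fun j => mul_nonneg (hc _) (hlast _), ?_, ?_⟩
    · -- sum of lambdas is 1
      have h1 : (1:ℝ) = ∑ k, c k * v k (Fin.last n) := by
        have := congrFun hsum (Fin.last n)
        rw [Fin.snoc_last, Finset.sum_apply] at this
        simpa using this
      rw [show (∑ j, c (eq j).1 * v (eq j).1 (Fin.last n))
          = ∑ k : {k // pk k}, c k.1 * v k.1 (Fin.last n) from
        Equiv.sum_comp eq (fun k : {k // pk k} => c k.1 * v k.1 (Fin.last n))]
      rw [h1, ← Fintype.sum_subtype_add_sum_subtype pk (fun k => c k * v k (Fin.last n))]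
      have : ∑ k : {k // ¬ pk k}, c k.1 * v k.1 (Fin.last n) = 0 :=
        Finset.sum_eq_zero fun k _ => by rw [hzero k.1 k.2, mul_zero]
      rw [this, add_zero]
    · -- z is the claimed combination
      funext i
      have hz : z i = ∑ k, c k * v k (Fin.castSucc i) := by
        have := congrFun hsum (Fin.castSucc i)
        rw [Fin.snoc_castSucc, Finset.sum_apply] at this
        simpa using this
      rw [Pi.add_apply]; erw [mulVec_cols, mulVec_cols]; rw [Finset.sum_apply, Finset.sum_apply]
      simp only [Pi.smul_apply, smul_eq_mul]
      rw [show (∑ j : Fin p, c (ep j).1 * v (ep j).1 (Fin.castSucc i))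
          = ∑ k : {k // ¬ pk k}, c k.1 * v k.1 (Fin.castSucc i) from
        Equiv.sum_comp ep (fun k : {k // ¬ pk k} => c k.1 * v k.1 (Fin.castSucc i))]
      have hq1 : ∀ j : Fin q, c (eq j).1 * v (eq j).1 (Fin.last n) *
          (v (eq j).1 (Fin.castSucc i) / v (eq j).1 (Fin.last n))
          = c (eq j).1 * v (eq j).1 (Fin.castSucc i) := by
        intro j
        have hne : v (eq j).1 (Fin.last n) ≠ 0 := ne_of_gt (eq j).2
        field_simp
      rw [Finset.sum_congr rfl (fun j _ => hq1 j)]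
      rw [show (∑ j : Fin q, c (eq j).1 * v (eq j).1 (Fin.castSucc i))
          = ∑ k : {k // pk k}, c k.1 * v k.1 (Fin.castSucc i) from
        Equiv.sum_comp eq (fun k : {k // pk k} => c k.1 * v k.1 (Fin.castSucc i))]
      rw [hz, ← Fintype.sum_subtype_add_sum_subtype pk (fun k => c k * v k (Fin.castSucc i))]
      ring
  · rintro ⟨μ, l, hμ, hl, hl1, hzeq⟩
    refine ⟨fun k => if h : pk k then l (eq.symm ⟨k, h⟩) / v k (Fin.last n)
      else μ (ep.symm ⟨k, h⟩), ?_, ?_⟩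
    · intro k
      by_cases h : pk k
      · simp only [dif_pos h]
        exact div_nonneg (hl _) (hlast k)
      · simp only [dif_neg h]
        exact hμ _
    · funext t
      rw [Finset.sum_apply]
      simp only [Pi.smul_apply, smul_eq_mul]
      rw [← Fintype.sum_subtype_add_sum_subtype pk
        (fun k => (if h : pk k then l (eq.symm ⟨k, h⟩) / v k (Fin.last n)
          else μ (ep.symm ⟨k, h⟩)) * v k t)]
      have hA : ∀ k : {k // pk k},
          (if h : pk k.1 then l (eq.symm ⟨k.1, h⟩) / v k.1 (Fin.last n)
            else μ (ep.symm ⟨k.1, h⟩)) * v k.1 t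
          = l (eq.symm k) / v k.1 (Fin.last n) * v k.1 t := by
        rintro ⟨k, h⟩; rw [dif_pos h]
      have hB : ∀ k : {k // ¬ pk k},
          (if h : pk k.1 then l (eq.symm ⟨k.1, h⟩) / v k.1 (Fin.last n)
            else μ (ep.symm ⟨k.1, h⟩)) * v k.1 t
          = μ (ep.symm k) * v k.1 t := by
        rintro ⟨k, h⟩; rw [dif_neg h]
      rw [Finset.sum_congr rfl (fun k _ => hA k), Finset.sum_congr rfl (fun k _ => hB k)]
      rw [show (∑ k : {k // pk k}, l (eq.symm k) / v k.1 (Fin.last n) * v k.1 t)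
          = ∑ j : Fin q, l (eq.symm (eq j)) / v (eq j).1 (Fin.last n) * v (eq j).1 t from
        (Equiv.sum_comp eq (fun k : {k // pk k} =>
          l (eq.symm k) / v k.1 (Fin.last n) * v k.1 t)).symm]
      rw [show (∑ k : {k // ¬ pk k}, μ (ep.symm k) * v k.1 t)
          = ∑ j : Fin p, μ (ep.symm (ep j)) * v (ep j).1 t from
        (Equiv.sum_comp ep (fun k : {k // ¬ pk k} => μ (ep.symm k) * v k.1 t)).symm]
      simp only [Equiv.symm_apply_apply]
      refine Fin.lastCases ?_ ?_ t
      · -- last coordinate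
        rw [Fin.snoc_last]
        have h1 : ∀ j : Fin q, l j / v (eq j).1 (Fin.last n) * v (eq j).1 (Fin.last n)
            = l j := by
          intro j
          have hne : v (eq j).1 (Fin.last n) ≠ 0 := ne_of_gt (eq j).2
          field_simp
        rw [Finset.sum_congr rfl (fun j _ => h1 j), hl1]
        have h2 : ∑ j : Fin p, μ j * v (ep j).1 (Fin.last n) = 0 :=
          Finset.sum_eq_zero fun j _ => by rw [hzero _ (ep j).2, mul_zero]
        rw [h2, add_zero]
      · intro i
        rw [Fin.snoc_castSucc, hzeq, Pi.add_apply]; erw [mulVec_cols, mulVec_cols]; rw [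
          Finset.sum_apply, Finset.sum_apply]
        simp only [Pi.smul_apply, smul_eq_mul]
        rw [add_comm]
        congr 1 <;> (apply Finset.sum_congr rfl; intro j _; ring)
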